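/- arXiv:1604.06015 — 2 statements merged into one kernel-verified Lean document; each statement's English description precedes it below -/
import Mathlib

section
/- Let ν̃ be a positive regular Borel measure on [0,∞) satisfying the Δ₂-condition with constant R, and let q > 0 satisfy 2^q > R. Then for every x > 0, the integral ∫₀^∞ g(r) dν̃(r) is finite, where g(r) = x^{−q} for 0 ≤ r < 1 and g(r) = (2^j + x)^{−q} for r ∈ [2^j, 2^{j+1}), j ∈ ℕ₀. In particular, ∫₀^∞ (r + x)^{−q} dν̃(r) < ∞. -/
open MeasureTheory Set
open scoped ENNReal

lemma exists_dyadic_block (r : ℝ) (hr : 1 ≤ r) :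
    ∃ j : ℕ, (2 : ℝ) ^ j ≤ r ∧ r < 2 ^ (j + 1) := by
  have hex : ∃ n : ℕ, r < 2 ^ n := pow_unbounded_of_one_lt r one_lt_two
  classical
  set n := Nat.find hex with hn
  have hnlt : r < 2 ^ n := Nat.find_spec hex
  have hn0 : n ≠ 0 := by
    intro h
    have := hnlt
    rw [h] at this
    simp at this
    linarith
  refine ⟨n - 1, ?_, ?_⟩
  · have := Nat.find_min hex (m := n - 1) (by omega)
    push_neg at this
    exact this
  · have : n - 1 + 1 = n := by omega
    rw [this]; exact hnlt

/-- Let `ν` be a positive regular Borel measure on `[0,∞)` satisfying the Δ₂-condition with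
constant `R`, and let `q > 0` satisfy `2 ^ q > R`.  Then for every `x > 0` the integral of the
step function `g` (equal to `x⁻ᑫ` on `[0,1)` and to `(2^j + x)⁻ᑫ` on `[2^j, 2^(j+1))`)
against `ν` is finite, with the bound `ν[0,1) * (x⁻ᑫ + (R-1) * ∑ (R/2^q)^j)`; in particular
`∫ (r + x)⁻ᑫ dν(r) < ∞`. -/
theorem stmt_1 (ν : Measure ℝ) [ν.Regular] (hsupp : ν (Iio (0 : ℝ)) = 0)
    (hfin : ∀ r : ℝ, 0 < r → ν (Ico (0 : ℝ) r) ≠ ⊤)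
    (R : ℝ) (hR : ∀ r : ℝ, 0 < r →
      ν (Ico (0 : ℝ) (2 * r)) ≤ ENNReal.ofReal R * ν (Ico (0 : ℝ) r))
    (q : ℝ) (hq : 0 < q) (hqR : R < 2 ^ q)
    (x : ℝ) (hx : 0 < x)
    (g : ℝ → ℝ)
    (hg1 : ∀ r : ℝ, 0 ≤ r → r < 1 → g r = x ^ (-q))
    (hg2 : ∀ j : ℕ, ∀ r : ℝ, (2 : ℝ) ^ j ≤ r → r < 2 ^ (j + 1) →
      g r = ((2 : ℝ) ^ j + x) ^ (-q)) :
    (∫⁻ r, ENNReal.ofReal (g r) ∂ν ≤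
        ν (Ico (0 : ℝ) 1) *
          ENNReal.ofReal (x ^ (-q) + (R - 1) * ∑' j : ℕ, (R / 2 ^ q) ^ j)) ∧
      ∫⁻ r, ENNReal.ofReal ((r + x) ^ (-q)) ∂ν < ⊤ := by
  classical
  set A := ν (Ico (0:ℝ) 1) with hA_def
  have hpow : ∀ k : ℕ, ν (Ico (0:ℝ) (2 ^ k)) ≤ (ENNReal.ofReal R) ^ k * A := by
    intro k
    induction k with
    | zero => simp [hA_def]
    | succ k ih =>
        have h2k : (0:ℝ) < 2 ^ k := by positivity
        have h2 : (2:ℝ) ^ (k+1) = 2 * 2 ^ k := by ring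
        rw [h2]
        calc ν (Ico (0:ℝ) (2 * 2 ^ k)) ≤ ENNReal.ofReal R * ν (Ico (0:ℝ) (2 ^ k)) := hR _ h2k
          _ ≤ ENNReal.ofReal R * ((ENNReal.ofReal R) ^ k * A) := mul_le_mul_right ih _
          _ = (ENNReal.ofReal R) ^ (k+1) * A := by ring
  rcases eq_or_ne A 0 with hA0 | hA0
  · -- trivial case : ν = 0
    have hIci : ν (Ici (0:ℝ)) = 0 := by
      have hsub : Ici (0:ℝ) ⊆ ⋃ k : ℕ, Ico (0:ℝ) (2 ^ k) := by
        intro r hr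
        obtain ⟨k, hk⟩ := pow_unbounded_of_one_lt r (one_lt_two (α := ℝ))
        exact mem_iUnion.2 ⟨k, hr, hk⟩
      have : ν (⋃ k : ℕ, Ico (0:ℝ) (2 ^ k)) ≤ ∑' k : ℕ, ν (Ico (0:ℝ) (2 ^ k)) :=
        measure_iUnion_le _
      have hz : ∀ k : ℕ, ν (Ico (0:ℝ) (2 ^ k)) = 0 := fun k =>
        le_antisymm (by simpa [hA0] using hpow k) zero_le
      have h0 : ν (⋃ k : ℕ, Ico (0:ℝ) (2 ^ k)) = 0 := by
        refine le_antisymm ?_ zero_le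
        simpa [hz] using this
      exact le_antisymm (h0 ▸ measure_mono hsub) zero_le
    have hnu0 : ν = 0 := by
      have : ν univ = 0 := by
        have : ν univ ≤ ν (Iio 0) + ν (Ici 0) := by
          rw [← Iio_union_Ici (a := (0:ℝ))]
          exact measure_union_le _ _
        refine le_antisymm ?_ zero_le
        simpa [hsupp, hIci] using this
      exact Measure.measure_univ_eq_zero.mp this
    rw [hnu0]
    simp
  · -- nontrivial case
    have hAfin : A ≠ ⊤ := hfin 1 one_pos
    have hR1 : (1:ℝ) ≤ R := by
      have h1 : A ≤ ν (Ico (0:ℝ) 2) := measure_mono (Ico_subset_Ico le_rfl one_le_two)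
      have h2 : ν (Ico (0:ℝ) 2) ≤ ENNReal.ofReal R * A := by
        have := hR 1 one_pos
        simpa using this
      have h3 : 1 * A ≤ ENNReal.ofReal R * A := by simpa using h1.trans h2
      have h4 : (1:ℝ≥0∞) ≤ ENNReal.ofReal R :=
        (ENNReal.mul_le_mul_iff_left hA0 hAfin).mp h3
      exact ENNReal.one_le_ofReal.mp h4
    -- block measure bound
    have hblock : ∀ j : ℕ, ν (Ico ((2:ℝ) ^ j) (2 ^ (j+1))) ≤
        ENNReal.ofReal (R - 1) * ((ENNReal.ofReal R) ^ j * A) := by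
      intro j
      set B := ν (Ico (0:ℝ) (2 ^ j)) with hB_def
      have hBfin : B ≠ ⊤ := hfin _ (by positivity)
      have hsplit : ν (Ico (0:ℝ) (2 ^ (j+1))) = B + ν (Ico ((2:ℝ) ^ j) (2 ^ (j+1))) := by
        rw [hB_def, ← measure_union ?_ measurableSet_Ico]
        · congr 1
          rw [Ico_union_Ico_eq_Ico]
          · positivity
          · have : (2:ℝ) ^ j ≤ 2 ^ (j+1) := by
              apply pow_le_pow_right₀ one_le_two (by omega)
            exact this
        · exact Set.Ico_disjoint_Ico_same
      have hle : B + ν (Ico ((2:ℝ) ^ j) (2 ^ (j+1))) ≤ ENNReal.ofReal R * B := by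
        rw [← hsplit]
        have h2 : (2:ℝ) ^ (j+1) = 2 * 2 ^ j := by ring
        rw [h2]
        exact hR _ (by positivity)
      have h5 : ν (Ico ((2:ℝ) ^ j) (2 ^ (j+1))) ≤ ENNReal.ofReal R * B - B :=
        ENNReal.le_sub_of_add_le_left hBfin hle
      have h6 : ENNReal.ofReal R * B - B = ENNReal.ofReal (R - 1) * B := by
        rw [ENNReal.ofReal_sub R zero_le_one, ENNReal.ofReal_one,
          ENNReal.sub_mul (fun _ _ => hBfin), one_mul]
      have h7 : ENNReal.ofReal (R - 1) * B ≤
          ENNReal.ofReal (R - 1) * ((ENNReal.ofReal R) ^ j * A) :=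
        mul_le_mul_right (hpow j) _
      exact h5.trans (h6 ▸ h7)
    -- the majorant
    set c : ℕ → ℝ≥0∞ := fun j => ENNReal.ofReal (((2:ℝ) ^ j + x) ^ (-q)) with hc_def
    set h : ℝ → ℝ≥0∞ := fun r =>
      (Ico (0:ℝ) 1).indicator (fun _ => ENNReal.ofReal (x ^ (-q))) r +
        ∑' j : ℕ, (Ico ((2:ℝ) ^ j) (2 ^ (j+1))).indicator (fun _ => c j) r with hh_def
    -- a.e. positivity
    have hae : ∀ᵐ r ∂ν, (0:ℝ) ≤ r := by
      rw [ae_iff]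
      have : {a : ℝ | ¬ (0:ℝ) ≤ a} = Iio 0 := by ext a; simp [not_le]
      rw [this]; exact hsupp
    -- pointwise bounds for nonneg r
    have hbound : ∀ r : ℝ, 0 ≤ r →
        ENNReal.ofReal (g r) ≤ h r ∧ ENNReal.ofReal ((r + x) ^ (-q)) ≤ h r := by
      intro r hr
      rcases lt_or_ge r 1 with hr1 | hr1
      · have hmem : r ∈ Ico (0:ℝ) 1 := ⟨hr, hr1⟩
        have hfirst : (Ico (0:ℝ) 1).indicator (fun _ => ENNReal.ofReal (x ^ (-q))) r =
            ENNReal.ofReal (x ^ (-q)) := indicator_of_mem hmem _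
        constructor
        · rw [hg1 r hr hr1]
          calc ENNReal.ofReal (x ^ (-q)) = _ := hfirst.symm
            _ ≤ h r := le_add_right le_rfl
        · have : (r + x) ^ (-q) ≤ x ^ (-q) :=
            Real.rpow_le_rpow_of_nonpos hx (by linarith) (by linarith)
          calc ENNReal.ofReal ((r + x) ^ (-q)) ≤ ENNReal.ofReal (x ^ (-q)) :=
                ENNReal.ofReal_le_ofReal this
            _ = _ := hfirst.symm
            _ ≤ h r := le_add_right le_rfl
      · obtain ⟨j, hj1, hj2⟩ := exists_dyadic_block r hr1
        have hmem : r ∈ Ico ((2:ℝ) ^ j) (2 ^ (j+1)) := ⟨hj1, hj2⟩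
        have hterm : (Ico ((2:ℝ) ^ j) (2 ^ (j+1))).indicator (fun _ => c j) r = c j :=
          indicator_of_mem hmem _
        have hsum : c j ≤ ∑' i : ℕ,
            (Ico ((2:ℝ) ^ i) (2 ^ (i+1))).indicator (fun _ => c i) r := by
          calc c j = _ := hterm.symm
            _ ≤ _ := ENNReal.le_tsum j
        constructor
        · rw [hg2 j r hj1 hj2]
          exact le_add_left hsum
        · have h2j : (0:ℝ) < 2 ^ j := by positivity
          have : (r + x) ^ (-q) ≤ ((2:ℝ) ^ j + x) ^ (-q) :=
            Real.rpow_le_rpow_of_nonpos (by linarith) (by linarith) (by linarith)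
          exact le_add_left ((ENNReal.ofReal_le_ofReal this).trans hsum)
    -- integral of h
    have hmeas1 : Measurable ((Ico (0:ℝ) 1).indicator
        (fun _ => ENNReal.ofReal (x ^ (-q)))) :=
      measurable_const.indicator measurableSet_Ico
    have hmeas2 : ∀ j : ℕ, Measurable ((Ico ((2:ℝ) ^ j) (2 ^ (j+1))).indicator
        (fun _ => c j)) := fun j => measurable_const.indicator measurableSet_Ico
    have hinth : ∫⁻ r, h r ∂ν =
        ENNReal.ofReal (x ^ (-q)) * A +
          ∑' j : ℕ, c j * ν (Ico ((2:ℝ) ^ j) (2 ^ (j+1))) := by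
      rw [hh_def]
      rw [lintegral_add_left hmeas1]
      rw [lintegral_indicator_const measurableSet_Ico]
      congr 1
      rw [lintegral_tsum (fun j => (hmeas2 j).aemeasurable)]
      congr 1
      ext j
      rw [lintegral_indicator_const measurableSet_Ico]
    -- geometric bound
    have h2q : (0:ℝ) < 2 ^ q := Real.rpow_pos_of_pos two_pos q
    set r0 : ℝ := R / 2 ^ q with hr0_def
    have hr0_nonneg : 0 ≤ r0 := div_nonneg (by linarith) h2q.le
    have hr0_lt : r0 < 1 := (div_lt_one h2q).mpr hqR
    have hS : ∑' j : ℕ, r0 ^ j = (1 - r0)⁻¹ := tsum_geometric_of_lt_one hr0_nonneg hr0_lt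
    have hSnonneg : 0 ≤ ∑' j : ℕ, r0 ^ j := by
      rw [hS]
      exact inv_nonneg.mpr (by linarith)
    have hcj : ∀ j : ℕ, c j ≤ (ENNReal.ofReal ((2:ℝ) ^ (-q))) ^ j := by
      intro j
      have h2j : (0:ℝ) < 2 ^ j := by positivity
      have h1 : ((2:ℝ) ^ j + x) ^ (-q) ≤ ((2:ℝ) ^ j) ^ (-q) :=
        Real.rpow_le_rpow_of_nonpos h2j (by linarith) (by linarith)
      have h2 : ((2:ℝ) ^ j) ^ (-q) = ((2:ℝ) ^ (-q)) ^ j := by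
        rw [← Real.rpow_natCast (2:ℝ) j, ← Real.rpow_mul two_pos.le,
          ← Real.rpow_natCast ((2:ℝ) ^ (-q)) j, ← Real.rpow_mul (by positivity)]
        ring_nf
      rw [hc_def]
      calc ENNReal.ofReal (((2:ℝ) ^ j + x) ^ (-q)) ≤
          ENNReal.ofReal (((2:ℝ) ^ (-q)) ^ j) := ENNReal.ofReal_le_ofReal (h2 ▸ h1)
        _ = (ENNReal.ofReal ((2:ℝ) ^ (-q))) ^ j :=
            ENNReal.ofReal_pow (Real.rpow_nonneg two_pos.le _) j
    have hmulr0 : ENNReal.ofReal ((2:ℝ) ^ (-q)) * ENNReal.ofReal R = ENNReal.ofReal r0 := by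
      rw [← ENNReal.ofReal_mul (Real.rpow_nonneg two_pos.le _)]
      congr 1
      rw [hr0_def, Real.rpow_neg two_pos.le]
      field_simp
    have hsum_le : ∑' j : ℕ, c j * ν (Ico ((2:ℝ) ^ j) (2 ^ (j+1))) ≤
        ENNReal.ofReal (R - 1) * A * ENNReal.ofReal (∑' j : ℕ, r0 ^ j) := by
      calc ∑' j : ℕ, c j * ν (Ico ((2:ℝ) ^ j) (2 ^ (j+1)))
          ≤ ∑' j : ℕ, (ENNReal.ofReal ((2:ℝ) ^ (-q))) ^ j *
              (ENNReal.ofReal (R - 1) * ((ENNReal.ofReal R) ^ j * A)) := by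
            exact ENNReal.tsum_le_tsum fun j => mul_le_mul' (hcj j) (hblock j)
        _ = ∑' j : ℕ, ENNReal.ofReal (R - 1) * A *
              (ENNReal.ofReal ((2:ℝ) ^ (-q)) * ENNReal.ofReal R) ^ j := by
            congr 1; ext j; rw [mul_pow]; ring
        _ = ENNReal.ofReal (R - 1) * A * ∑' j : ℕ, (ENNReal.ofReal r0) ^ j := by
            rw [ENNReal.tsum_mul_left, hmulr0]
        _ ≤ ENNReal.ofReal (R - 1) * A * ENNReal.ofReal (∑' j : ℕ, r0 ^ j) := by
            apply mul_le_mul_right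
            rw [ENNReal.tsum_geometric, hS]
            have hlt1 : ENNReal.ofReal r0 < 1 := by
              rw [← ENNReal.ofReal_one]
              exact ENNReal.ofReal_lt_ofReal_iff_of_nonneg hr0_nonneg |>.mpr hr0_lt
            rw [← ENNReal.ofReal_one, ← ENNReal.ofReal_sub _ hr0_nonneg,
              ← ENNReal.ofReal_inv_of_pos (by linarith)]
    -- total bound on h-integral
    have htotal : ∫⁻ r, h r ∂ν ≤
        A * ENNReal.ofReal (x ^ (-q) + (R - 1) * ∑' j : ℕ, r0 ^ j) := by
      rw [hinth]
      have hxq : 0 ≤ x ^ (-q) := Real.rpow_nonneg hx.le _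
      calc ENNReal.ofReal (x ^ (-q)) * A + ∑' j : ℕ, c j * ν (Ico ((2:ℝ) ^ j) (2 ^ (j+1)))
          ≤ ENNReal.ofReal (x ^ (-q)) * A +
            ENNReal.ofReal (R - 1) * A * ENNReal.ofReal (∑' j : ℕ, r0 ^ j) :=
            add_le_add_right hsum_le _
        _ = A * (ENNReal.ofReal (x ^ (-q)) +
              ENNReal.ofReal ((R - 1) * ∑' j : ℕ, r0 ^ j)) := by
            rw [ENNReal.ofReal_mul (by linarith)]; ring
        _ = A * ENNReal.ofReal (x ^ (-q) + (R - 1) * ∑' j : ℕ, r0 ^ j) := by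
            rw [← ENNReal.ofReal_add hxq (mul_nonneg (by linarith) hSnonneg)]
    have hfinRHS : A * ENNReal.ofReal (x ^ (-q) + (R - 1) * ∑' j : ℕ, r0 ^ j) < ⊤ :=
      ENNReal.mul_lt_top hAfin.lt_top ENNReal.ofReal_lt_top
    constructor
    · calc ∫⁻ r, ENNReal.ofReal (g r) ∂ν ≤ ∫⁻ r, h r ∂ν :=
          lintegral_mono_ae (hae.mono fun r hr => (hbound r hr).1)
        _ ≤ _ := htotal
    · calc ∫⁻ r, ENNReal.ofReal ((r + x) ^ (-q)) ∂ν ≤ ∫⁻ r, h r ∂ν :=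
          lintegral_mono_ae (hae.mono fun r hr => (hbound r hr).2)
        _ ≤ _ := htotal
        _ < ⊤ := hfinRHS
end

section
/- Let α ∈ ℂ₊ and let μ be a Carleson measure for the Dirichlet space 𝒟(ℂ₊) with constant C(μ). Then μ(Q(a)) ≤ 2 C'(Re(a) + 2) for all a ∈ ℂ₊ and some constant C' depending only on μ; i.e., μ(Q(a)) = O(Re(a) + 1). -/
open MeasureTheory Set
open scoped ENNReal

/-- The Laplace transform. -/
noncomputable def laplace (f : ℝ → ℂ) (z : ℂ) : ℂ :=
  ∫ t in Ioi (0 : ℝ), f t * Complex.exp (-z * t)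

/-- The Carleson square centred at `a ∈ ℂ₊`. -/
def carlesonSquare (a : ℂ) : Set ℂ :=
  {z : ℂ | 0 < z.re ∧ z.re ≤ 2 * a.re ∧ |z.im - a.im| ≤ a.re}

section Aux

open Filter
open scoped Topology

private lemma my_integrable_cexp {c : ℂ} (hc : 0 < c.re) :
    IntegrableOn (fun t : ℝ => Complex.exp (-c * t)) (Ioi 0) := by
  apply (exp_neg_integrableOn_Ioi 0 hc).mono'
  · exact (Complex.continuous_exp.comp (by continuity)).aestronglyMeasurable
  · filter_upwards with t
    apply le_of_eq
    simp [Complex.norm_exp, Complex.mul_re]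

private lemma my_integral_cexp {c : ℂ} (hc : 0 < c.re) :
    ∫ t in Ioi (0:ℝ), Complex.exp (-c * t) = 1 / c := by
  have hc0 : c ≠ 0 := fun h => by simp [h] at hc
  have hderiv : ∀ t : ℝ, HasDerivAt (fun t : ℝ => -Complex.exp (-c * t) / c)
      (Complex.exp (-c * t)) t := by
    intro t
    have h1 : HasDerivAt (fun t : ℝ => (t : ℂ)) 1 t := Complex.ofRealCLM.hasDerivAt
    have h2 := ((h1.const_mul (-c)).cexp.neg).div_const c
    refine h2.congr_deriv ?_
    rw [mul_one, mul_neg, neg_neg, mul_div_assoc, div_self hc0, mul_one]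
  have htend : Tendsto (fun t : ℝ => -Complex.exp (-c * t) / c) atTop (𝓝 0) := by
    rw [tendsto_zero_iff_norm_tendsto_zero]
    have h : Tendsto (fun t : ℝ => Real.exp (-c.re * t) / ‖c‖) atTop (𝓝 (0 / ‖c‖)) := by
      apply Tendsto.div_const
      exact Real.tendsto_exp_atBot.comp (tendsto_id.const_mul_atTop_of_neg (by linarith))
    rw [zero_div] at h
    apply h.congr
    intro t
    rw [eq_comm, norm_div, norm_neg]
    congr 1
    simp [Complex.norm_exp, Complex.mul_re]
  rw [integral_Ioi_of_hasDerivAt_of_tendsto' (fun t _ => hderiv t) (my_integrable_cexp hc) htend]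
  simp [neg_div, sub_neg_eq_add]

private lemma my_integral_exp {r : ℝ} (hr : 0 < r) :
    ∫ t in Ioi (0:ℝ), Real.exp (-r * t) = 1 / r := by
  have h := Real.integral_rpow_mul_exp_neg_mul_Ioi one_pos hr
  simp only [sub_self, Real.rpow_zero, one_mul, Real.rpow_one, Real.Gamma_one, mul_one] at h
  rw [← h]
  apply setIntegral_congr_fun measurableSet_Ioi
  intro t _
  ring_nf

private lemma my_integral_texp {r : ℝ} (hr : 0 < r) :
    ∫ t in Ioi (0:ℝ), t * Real.exp (-r * t) = 1 / r ^ 2 := by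
  have h := Real.integral_rpow_mul_exp_neg_mul_Ioi two_pos hr
  have hΓ : Real.Gamma 2 = 1 := by
    rw [show (2:ℝ) = 1 + 1 by norm_num, Real.Gamma_add_one one_ne_zero, Real.Gamma_one, mul_one]
  rw [hΓ, mul_one] at h
  have heq : ∀ t ∈ Ioi (0:ℝ), t ^ (2 - 1 : ℝ) * Real.exp (-(r * t)) = t * Real.exp (-r * t) := by
    intro t _
    norm_num
  rw [setIntegral_congr_fun measurableSet_Ioi heq] at h
  rw [h, show (2:ℝ) = ((2:ℕ):ℝ) by norm_num, Real.rpow_natCast]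
  field_simp

private lemma my_integrable_texp {r : ℝ} (hr : 0 < r) :
    IntegrableOn (fun t : ℝ => t * Real.exp (-r * t)) (Ioi 0) := by
  have h := integrableOn_rpow_mul_exp_neg_mul_rpow (by norm_num : (-1:ℝ) < 1) (zero_lt_one (α := ℝ)) hr
  apply h.congr_fun ?_ measurableSet_Ioi
  intro t ht
  simp [Real.rpow_one]

end Aux

/-- If `μ` is a Carleson measure for the Dirichlet space
`𝒟(ℂ₊) = 𝔏(L²_{1+t}(0,∞))`, then `μ(Q(a)) ≤ 2 C' (Re a + 2)` for all `a ∈ ℂ₊` and some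
constant `C' > 0` depending only on `μ`; i.e. `μ(Q(a)) = O(Re a + 1)`. -/
theorem stmt_11 (μ : Measure ℂ) (hμ : μ {z : ℂ | ¬ 0 < z.re} = 0)
    (C : ℝ) (hC : 0 < C)
    (hCarleson : ∀ f : ℝ → ℂ,
      AEStronglyMeasurable f (volume.restrict (Ioi (0 : ℝ))) →
      IntegrableOn (fun t => ‖f t‖ ^ 2 * (1 + t)) (Ioi (0 : ℝ)) volume →
      ∫⁻ z in {z : ℂ | 0 < z.re}, ‖laplace f z‖₊ ^ 2 ∂μ ≤
        ENNReal.ofReal (C * ∫ t in Ioi (0 : ℝ), ‖f t‖ ^ 2 * (1 + t))) :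
    ∃ C' : ℝ, 0 < C' ∧ ∀ a : ℂ, 0 < a.re →
      μ (carlesonSquare a) ≤ ENNReal.ofReal (2 * C' * (a.re + 2)) := by
  refine ⟨5 * C / 2, by linarith, fun a hx => ?_⟩
  set x : ℝ := a.re with hxdef
  set b : ℂ := (starRingEnd ℂ) a with hbdef
  set f : ℝ → ℂ := fun t => Complex.exp (-b * t) with hfdef
  have hbre : b.re = x := Complex.conj_re a
  have hbim : b.im = -a.im := Complex.conj_im a
  -- norm of f
  have hnorm : ∀ t : ℝ, ‖f t‖ = Real.exp (-x * t) := by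
    intro t
    simp [hfdef, Complex.norm_exp, Complex.mul_re, hbre]
  -- measurability of f
  have hmeas : AEStronglyMeasurable f (volume.restrict (Ioi (0:ℝ))) :=
    (Complex.continuous_exp.comp (by continuity)).aestronglyMeasurable
  -- the weighted L² integral of f
  have hptwise : ∀ t ∈ Ioi (0:ℝ), ‖f t‖ ^ 2 * (1 + t)
      = Real.exp (-(2*x) * t) + t * Real.exp (-(2*x) * t) := by
    intro t _
    rw [hnorm t, sq, ← Real.exp_add, show -x*t + -x*t = -(2*x)*t by ring]
    ring
  have h2x : 0 < 2 * x := by linarith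
  have hint1 := exp_neg_integrableOn_Ioi 0 h2x
  have hint2 := my_integrable_texp h2x
  have hIntOn : IntegrableOn (fun t => ‖f t‖ ^ 2 * (1 + t)) (Ioi (0:ℝ)) volume := by
    apply IntegrableOn.congr_fun (hint1.add hint2) ?_ measurableSet_Ioi
    intro t ht
    simp only [Pi.add_apply]
    exact (hptwise t ht).symm
  have hI : (∫ t in Ioi (0:ℝ), ‖f t‖ ^ 2 * (1 + t)) = 1/(2*x) + 1/(2*x)^2 := by
    rw [setIntegral_congr_fun measurableSet_Ioi hptwise,
      integral_add hint1 hint2, my_integral_exp h2x, my_integral_texp h2x]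
  -- the Laplace transform of f
  have hF : ∀ z : ℂ, 0 < z.re → laplace f z = 1 / (z + b) := by
    intro z hz
    have hre : 0 < (z + b).re := by
      rw [Complex.add_re, hbre]; linarith
    have heq : ∀ t ∈ Ioi (0:ℝ), f t * Complex.exp (-z * t)
        = Complex.exp (-(z + b) * t) := by
      intro t _
      rw [hfdef, ← Complex.exp_add]
      congr 1
      ring
    rw [laplace, setIntegral_congr_fun measurableSet_Ioi heq, my_integral_cexp hre]
  -- lower bound on the Laplace transform on the Carleson square
  have hlow : ∀ z ∈ carlesonSquare a,
      ENNReal.ofReal (1/(10*x^2)) ≤ (‖laplace f z‖₊ : ℝ≥0∞) ^ 2 := by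
    intro z hz
    obtain ⟨hz1, hz2, hz3⟩ := hz
    rw [hF z hz1]
    have hzb : z + b ≠ 0 := by
      intro h
      have : (z + b).re = 0 := by rw [h]; simp
      rw [Complex.add_re, hbre] at this
      linarith
    have habs : ‖z + b‖ ^ 2 ≤ 10 * x ^ 2 := by
      rw [Complex.sq_norm, Complex.normSq_apply,
        Complex.add_re, Complex.add_im, hbre, hbim]
      have h3 := abs_le.mp hz3
      nlinarith [h3.1, h3.2]
    have hnormpos : 0 < ‖z + b‖ := norm_pos_iff.mpr hzb
    rw [← ENNReal.ofReal_coe_nnreal, coe_nnnorm, ← ENNReal.ofReal_pow (norm_nonneg _)]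
    apply ENNReal.ofReal_le_ofReal
    rw [norm_div, norm_one, div_pow, one_pow]
    apply one_div_le_one_div_of_le (by positivity) habs
  -- measurability of the Carleson square
  have hmeasQ : MeasurableSet (carlesonSquare a) := by
    have : carlesonSquare a = {z : ℂ | 0 < z.re} ∩ ({z : ℂ | z.re ≤ 2 * a.re} ∩
        {z : ℂ | |z.im - a.im| ≤ a.re}) := by
      rfl
    rw [this]
    exact (measurableSet_lt measurable_const Complex.measurable_re).inter
      ((measurableSet_le Complex.measurable_re measurable_const).inter
        (measurableSet_le ((Complex.measurable_im.sub measurable_const).abs) measurable_const))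
  -- main chain of inequalities
  have key : ENNReal.ofReal (1/(10*x^2)) * μ (carlesonSquare a)
      ≤ ENNReal.ofReal (C * (1/(2*x) + 1/(2*x)^2)) := by
    calc ENNReal.ofReal (1/(10*x^2)) * μ (carlesonSquare a)
        = ∫⁻ _ in carlesonSquare a, ENNReal.ofReal (1/(10*x^2)) ∂μ := by
          rw [setLIntegral_const]
      _ ≤ ∫⁻ z in carlesonSquare a, (‖laplace f z‖₊ : ℝ≥0∞) ^ 2 ∂μ :=
          setLIntegral_mono' hmeasQ hlow
      _ ≤ ∫⁻ z in {z : ℂ | 0 < z.re}, (‖laplace f z‖₊ : ℝ≥0∞) ^ 2 ∂μ :=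
          lintegral_mono_set (fun z hz => hz.1)
      _ ≤ ENNReal.ofReal (C * ∫ t in Ioi (0:ℝ), ‖f t‖ ^ 2 * (1 + t)) :=
          hCarleson f hmeas hIntOn
      _ = ENNReal.ofReal (C * (1/(2*x) + 1/(2*x)^2)) := by rw [hI]
  have hc0 : (0:ℝ) < 1/(10*x^2) := by positivity
  have h1 : μ (carlesonSquare a)
      ≤ ENNReal.ofReal (C * (1/(2*x) + 1/(2*x)^2)) / ENNReal.ofReal (1/(10*x^2)) := by
    rw [ENNReal.le_div_iff_mul_le (Or.inl (ENNReal.ofReal_pos.mpr hc0).ne')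
      (Or.inl ENNReal.ofReal_ne_top), mul_comm]
    exact key
  rw [← ENNReal.ofReal_div_of_pos hc0] at h1
  refine h1.trans (ENNReal.ofReal_le_ofReal ?_)
  have hx0 : x ≠ 0 := ne_of_gt hx
  have heq : C * (1/(2*x) + 1/(2*x)^2) / (1/(10*x^2)) = 5*C*x + 5*C/2 := by
    field_simp
    ring
  rw [heq]
  nlinarith [mul_pos hC hx]
end
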